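/- (Gaschütz) Let G be a profinite group topologically generated by d elements. Suppose M is a closed normal subgroup of G and g_1, …, g_k are k ≥ d elements of G such that the closure of the subgroup generated by g_1, …, g_k together with M is all of G. Then there exist elements g_i' ∈ g_iM (for i = 1, …, k) such that the closure of the subgroup generated by g_1', …, g_k' equals G. -/

import Mathlib

open Subgroup Pointwise

universe u

namespace GaschutzAux

variable {G : Type u} [Group G]

/-- Lifts of the coset tuple of `t` that generate the whole group. -/
def genS (N : Subgroup G) {k : ℕ} (t : Fin k → G) : Set (Fin k → G) :=
  {u | (∀ i, (t i)⁻¹ * u i ∈ N) ∧ Subgroup.closure (Set.range u) = ⊤}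

/-- Lifts of the coset tuple of `t` that generate exactly `H`. -/
def genH (N : Subgroup G) {k : ℕ} (t : Fin k → G) (H : Subgroup G) : Set (Fin k → G) :=
  {u | (∀ i, (t i)⁻¹ * u i ∈ N) ∧ Subgroup.closure (Set.range u) = H}

lemma genS_eq_genH (N : Subgroup G) {k : ℕ} (t : Fin k → G) : genS N t = genH N t ⊤ := rfl

lemma sup_of_mem_genH {N : Subgroup G} [N.Normal] {k : ℕ} {t : Fin k → G} {H : Subgroup G}
    (ht : Subgroup.closure (Set.range t) ⊔ N = ⊤) {u : Fin k → G} (hu : u ∈ genH N t H) :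
    H ⊔ N = ⊤ := by
  rw [← top_le_iff, ← ht, sup_le_iff]
  constructor
  · rw [Subgroup.closure_le]
    rintro _ ⟨i, rfl⟩
    have h1 : u i ∈ H ⊔ N := by
      apply Subgroup.mem_sup_left
      rw [← hu.2]
      exact Subgroup.subset_closure ⟨i, rfl⟩
    have h2 : ((t i)⁻¹ * u i)⁻¹ ∈ H ⊔ N := Subgroup.mem_sup_right (inv_mem (hu.1 i))
    have := mul_mem h1 h2
    simpa [mul_assoc] using this
  · exact le_sup_right

/-- The coset tuple of `t` can be realized inside `H` whenever `H ⊔ N = ⊤`. -/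
lemma exists_tuple_in (N : Subgroup G) [N.Normal] {k : ℕ} (t : Fin k → G) {H : Subgroup G}
    (hHN : H ⊔ N = ⊤) : ∃ t' : Fin k → H, ∀ i, (t i)⁻¹ * (t' i : G) ∈ N := by
  have : ∀ i, ∃ x : H, (t i)⁻¹ * (x : G) ∈ N := by
    intro i
    have : t i ∈ ((H : Set G) * (N : Set G)) := by
      rw [← Subgroup.mul_normal, hHN]; trivial
    obtain ⟨h, hh, n, hn, heq⟩ := this
    refine ⟨⟨h, hh⟩, ?_⟩
    have : (t i)⁻¹ * h = n⁻¹ := by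
      rw [← heq]; group
    rw [this]
    exact Subgroup.inv_mem N hn
  choose t' ht' using this
  exact ⟨t', ht'⟩

end GaschutzAux

namespace GaschutzAux

variable {G : Type u} [Group G]

lemma closure_subtype_iff {H : Subgroup G} {k : ℕ} (w : Fin k → H) :
    Subgroup.closure (Set.range w) = ⊤ ↔
      Subgroup.closure (Set.range fun i => (w i : G)) = H := by
  have hmap : Subgroup.map H.subtype (Subgroup.closure (Set.range w))
      = Subgroup.closure (Set.range fun i => (w i : G)) := by
    rw [MonoidHom.map_closure]
    congr 1
    rw [← Set.range_comp]
    rfl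
  constructor
  · intro h
    rw [← hmap, h, ← MonoidHom.range_eq_map, Subgroup.range_subtype]
  · intro h
    apply Subgroup.map_injective H.subtype_injective
    rw [hmap, h, ← MonoidHom.range_eq_map, Subgroup.range_subtype]

lemma coset_cond_iff {N : Subgroup G} {a b c : G} (hab : a⁻¹ * b ∈ N) :
    a⁻¹ * c ∈ N ↔ b⁻¹ * c ∈ N := by
  have key : b⁻¹ * c = (a⁻¹ * b)⁻¹ * (a⁻¹ * c) := by group
  constructor
  · intro h; rw [key]; exact mul_mem (inv_mem hab) h
  · intro h
    have : a⁻¹ * c = (a⁻¹ * b) * (b⁻¹ * c) := by group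
    rw [this]; exact mul_mem hab h

/-- The bijection between lifts generating exactly `H` and generating lifts inside `H`. -/
noncomputable def genH_equiv (N : Subgroup G) {k : ℕ} (t : Fin k → G) (H : Subgroup G)
    (t' : Fin k → H) (ht' : ∀ i, (t i)⁻¹ * (t' i : G) ∈ N) :
    genH N t H ≃ genS (N.subgroupOf H) t' where
  toFun := fun u => ⟨fun i => ⟨u.1 i, by
      have : u.1 i ∈ Subgroup.closure (Set.range u.1) := Subgroup.subset_closure ⟨i, rfl⟩
      rw [u.2.2] at this; exact this⟩, by
    constructor
    · intro i
      rw [Subgroup.mem_subgroupOf]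
      simpa using (coset_cond_iff (ht' i)).1 (u.2.1 i)
    · rw [closure_subtype_iff]
      exact u.2.2⟩
  invFun := fun v => ⟨fun i => (v.1 i : G), by
    constructor
    · intro i
      apply (coset_cond_iff (ht' i)).2
      have := v.2.1 i
      rw [Subgroup.mem_subgroupOf] at this
      simpa using this
    · exact (closure_subtype_iff v.1).1 v.2.2⟩
  left_inv := fun u => rfl
  right_inv := fun v => rfl

lemma sup_subgroupOf (N : Subgroup G) [N.Normal] {k : ℕ} {t : Fin k → G} {H : Subgroup G}
    (t' : Fin k → H) (ht' : ∀ i, (t i)⁻¹ * (t' i : G) ∈ N)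
    (ht : Subgroup.closure (Set.range t) ⊔ N = ⊤) :
    Subgroup.closure (Set.range t') ⊔ N.subgroupOf H = ⊤ := by
  set K : Subgroup G := Subgroup.map H.subtype (Subgroup.closure (Set.range t')) with hK
  have hKN : K ⊔ N = ⊤ := by
    rw [← top_le_iff, ← ht, sup_le_iff]
    refine ⟨?_, le_sup_right⟩
    rw [Subgroup.closure_le]
    rintro _ ⟨i, rfl⟩
    have h1 : (t' i : G) ∈ K ⊔ N := Subgroup.mem_sup_left
      ⟨t' i, Subgroup.subset_closure ⟨i, rfl⟩, rfl⟩
    have h2 : ((t i)⁻¹ * (t' i : G))⁻¹ ∈ K ⊔ N := Subgroup.mem_sup_right (inv_mem (ht' i))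
    have := mul_mem h1 h2
    simpa [mul_assoc] using this
  rw [← top_le_iff]
  rintro h -
  have hh : (h : G) ∈ ((K : Set G) * (N : Set G)) := by
    rw [← Subgroup.mul_normal, hKN]; trivial
  obtain ⟨a, ha, n, hn, heq⟩ := hh
  obtain ⟨b, hb, rfl⟩ := ha
  have hbn : b⁻¹ * h ∈ N.subgroupOf H := by
    rw [Subgroup.mem_subgroupOf]
    have : ((b : G))⁻¹ * (h : G) = n := by rw [← heq]; exact inv_mul_cancel_left _ _
    simpa [this] using hn
  have : h = b * (b⁻¹ * h) := by group
  rw [this]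
  exact mul_mem (Subgroup.mem_sup_left hb) (Subgroup.mem_sup_right hbn)

end GaschutzAux

namespace GaschutzAux

lemma nat_card_sigma {ι : Type v} [Fintype ι] (f : ι → Type w) [∀ i, Finite (f i)] :
    Nat.card ((i : ι) × f i) = ∑ i, Nat.card (f i) := by
  letI := fun i => Fintype.ofFinite (f i)
  simp [Nat.card_eq_fintype_card, Fintype.card_sigma]

variable {G : Type u} [Group G]

/-- The set of all lifts of the coset tuple of `t`. -/
def liftS (N : Subgroup G) {k : ℕ} (t : Fin k → G) : Set (Fin k → G) :=
  {u | ∀ i, (t i)⁻¹ * u i ∈ N}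

/-- The number of lifts does not depend on the base tuple. -/
noncomputable def liftS_equiv (N : Subgroup G) {k : ℕ} (t s : Fin k → G) :
    liftS N t ≃ liftS N s where
  toFun := fun u => ⟨fun i => s i * ((t i)⁻¹ * u.1 i), fun i => by
    have := u.2 i
    simpa [mul_assoc] using this⟩
  invFun := fun u => ⟨fun i => t i * ((s i)⁻¹ * u.1 i), fun i => by
    have := u.2 i
    simpa [mul_assoc] using this⟩
  left_inv := fun u => by
    ext i; simp [mul_assoc]
  right_inv := fun u => by
    ext i; simp [mul_assoc]

/-- Decomposition of lifts according to the subgroup they generate. -/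
noncomputable def liftS_sigma_equiv (N : Subgroup G) {k : ℕ} (t : Fin k → G) :
    ((H : Subgroup G) × genH N t H) ≃ liftS N t where
  toFun := fun p => ⟨p.2.1, p.2.2.1⟩
  invFun := fun u => ⟨Subgroup.closure (Set.range u.1), ⟨u.1, u.2, rfl⟩⟩
  left_inv := by
    rintro ⟨H, u, h1, rfl⟩
    rfl
  right_inv := fun u => rfl

theorem count_eq : ∀ (n : ℕ) (G : Type u) [Group G] [Finite G], Nat.card G ≤ n →
    ∀ (N : Subgroup G), N.Normal → ∀ (k : ℕ) (t s : Fin k → G),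
    Subgroup.closure (Set.range t) ⊔ N = ⊤ → Subgroup.closure (Set.range s) ⊔ N = ⊤ →
    Nat.card (genS N t) = Nat.card (genS N s) := by
  intro n
  induction n with
  | zero =>
    intro G _ _ hcard
    exact absurd hcard (by simpa using Nat.card_pos.ne')
  | succ n ih =>
    intro G _ _ hcard N hN k t s ht hs
    letI := Fintype.ofFinite (Subgroup G)
    classical
    have hsum : ∀ w : Fin k → G,
        Nat.card (liftS N w) = ∑ H : Subgroup G, Nat.card (genH N w H) := by
      intro w
      rw [← Nat.card_congr (liftS_sigma_equiv N w), nat_card_sigma]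
    have hL : Nat.card (liftS N t) = Nat.card (liftS N s) :=
      Nat.card_congr (liftS_equiv N t s)
    rw [hsum, hsum] at hL
    rw [← Finset.add_sum_erase Finset.univ _ (Finset.mem_univ (⊤ : Subgroup G)),
        ← Finset.add_sum_erase Finset.univ _ (Finset.mem_univ (⊤ : Subgroup G))] at hL
    have hrest : ∑ H ∈ Finset.univ.erase (⊤ : Subgroup G), Nat.card (genH N t H)
        = ∑ H ∈ Finset.univ.erase (⊤ : Subgroup G), Nat.card (genH N s H) := by
      apply Finset.sum_congr rfl
      intro H hH
      have hHne : H ≠ ⊤ := (Finset.mem_erase.1 hH).1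
      by_cases hHN : H ⊔ N = ⊤
      · obtain ⟨t', ht'⟩ := exists_tuple_in N t hHN
        obtain ⟨s', hs'⟩ := exists_tuple_in N s hHN
        rw [Nat.card_congr (genH_equiv N t H t' ht'), Nat.card_congr (genH_equiv N s H s' hs')]
        have hcardH : Nat.card H ≤ n := by
          have hlt : Nat.card H < Nat.card G :=
            lt_of_le_of_ne (Subgroup.card_le_card_group H)
              (fun he => hHne (Subgroup.eq_top_of_card_eq H he))
          omega
        exact ih H hcardH (N.subgroupOf H) inferInstance k t' s'
          (sup_subgroupOf N t' ht' ht) (sup_subgroupOf N s' hs' hs)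
      · have h1 : genH N t H = ∅ := by
          ext u
          simp only [Set.mem_empty_iff_false, iff_false]
          intro hu
          exact hHN (sup_of_mem_genH ht hu)
        have h2 : genH N s H = ∅ := by
          ext u
          simp only [Set.mem_empty_iff_false, iff_false]
          intro hu
          exact hHN (sup_of_mem_genH hs hu)
        simp [h1, h2]
    rw [hrest] at hL
    have h0 : Nat.card (genS N t) = Nat.card (genH N t (⊤ : Subgroup G)) := rfl
    have h0' : Nat.card (genS N s) = Nat.card (genH N s (⊤ : Subgroup G)) := rfl
    omega

/-- Gaschütz's lemma for finite groups. -/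
theorem gaschutz_finite {G : Type u} [Group G] [Finite G] (N : Subgroup G) [hN : N.Normal]
    {d k : ℕ} (hdk : d ≤ k) (s : Fin d → G) (hs : Subgroup.closure (Set.range s) = ⊤)
    (t : Fin k → G) (ht : Subgroup.closure (Set.range t) ⊔ N = ⊤) :
    ∃ u : Fin k → G, (∀ i, (t i)⁻¹ * u i ∈ N) ∧ Subgroup.closure (Set.range u) = ⊤ := by
  set S : Fin k → G := fun i => if h : (i : ℕ) < d then s ⟨i, h⟩ else 1 with hS
  have hSgen : Subgroup.closure (Set.range S) = ⊤ := by
    rw [← top_le_iff, ← hs, Subgroup.closure_le]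
    rintro _ ⟨j, rfl⟩
    have : s j = S (Fin.castLE hdk j) := by
      simp [hS, Fin.castLE, j.2]
    rw [this]
    exact Subgroup.subset_closure ⟨_, rfl⟩
  have hSsup : Subgroup.closure (Set.range S) ⊔ N = ⊤ := by rw [hSgen]; exact top_sup_eq N
  have hmem : S ∈ genS N S := ⟨fun i => by simpa using one_mem N, hSgen⟩
  have hcount := count_eq (Nat.card G) G le_rfl N hN k t S ht hSsup
  have hpos : Nat.card (genS N S) ≠ 0 := by
    have : (genS N S).Nonempty := ⟨S, hmem⟩
    have hfin : (genS N S).Finite := Set.toFinite _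
    simpa [Nat.card_coe_set_eq] using (Set.ncard_ne_zero_of_mem hmem hfin)
  have : Nat.card (genS N t) ≠ 0 := by rw [hcount]; exact hpos
  have hne : (genS N t).Nonempty := by
    rw [← Set.nonempty_coe_sort]
    exact Nat.card_ne_zero.mp this |>.1
  obtain ⟨u, hu⟩ := hne
  exact ⟨u, hu.1, hu.2⟩

end GaschutzAux

namespace GaschutzAux

open scoped Pointwise

variable {G : Type u} [Group G] [TopologicalSpace G] [IsTopologicalGroup G]

instance : Nonempty (OpenNormalSubgroup G) :=
  ⟨⟨⊤, ⟨fun n hn g => by simp_all [OpenSubgroup.mem_top]⟩⟩⟩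

lemma exists_ons_sub_nhds [CompactSpace G] [T2Space G] [TotallyDisconnectedSpace G]
    {W : Set G} (hW : W ∈ nhds (1 : G)) : ∃ U : OpenNormalSubgroup G, (U : Set G) ⊆ W := by
  obtain ⟨V, ⟨h1V, hVclopen⟩, hVW⟩ := (nhds_basis_clopen (1 : G)).mem_iff.1 hW
  obtain ⟨U, hU⟩ :=
    IsTopologicalGroup.exist_openNormalSubgroup_sub_clopen_nhds_of_one hVclopen h1V
  exact ⟨U, fun x hx => hVW (hU hx)⟩

lemma map_eq_top_of_dense (H : Subgroup G) (hH : Dense (H : Set G))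
    (U : OpenNormalSubgroup G) :
    Subgroup.map (QuotientGroup.mk' U.toSubgroup) H = ⊤ := by
  rw [eq_top_iff]
  rintro x -
  obtain ⟨g, rfl⟩ := QuotientGroup.mk'_surjective U.toSubgroup x
  have hopen : IsOpen (g • (U.toSubgroup : Set G)) := U.toOpenSubgroup.isOpen.smul g
  have hne : (g • (U.toSubgroup : Set G)).Nonempty :=
    ⟨g, ⟨1, one_mem _, mul_one g⟩⟩
  obtain ⟨h, hhH, hhU⟩ := hH.exists_mem_open hopen hne
  obtain ⟨u, huU, rfl⟩ := hhU
  refine ⟨g * u, hhH, ?_⟩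
  show QuotientGroup.mk (g * u) = QuotientGroup.mk g
  rw [QuotientGroup.eq]
  simpa using (inv_mem huU : u⁻¹ ∈ U.toSubgroup)

lemma dense_of_forall_map_eq_top [CompactSpace G] [T2Space G] [TotallyDisconnectedSpace G]
    (H : Subgroup G)
    (h : ∀ U : OpenNormalSubgroup G, Subgroup.map (QuotientGroup.mk' U.toSubgroup) H = ⊤) :
    Dense (H : Set G) := by
  rw [dense_iff_inter_open]
  rintro W hW ⟨w, hwW⟩
  have hWnhds : w⁻¹ • W ∈ nhds (1 : G) := by
    refine (hW.smul w⁻¹).mem_nhds ?_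
    exact ⟨w, hwW, by simp⟩
  obtain ⟨U, hU⟩ := exists_ons_sub_nhds hWnhds
  have hx : (QuotientGroup.mk w : G ⧸ U.toSubgroup) ∈
      Subgroup.map (QuotientGroup.mk' U.toSubgroup) H := by rw [h U]; trivial
  obtain ⟨y, hyH, hy⟩ := hx
  have hyW : y ∈ W := by
    have : y⁻¹ * w ∈ U.toSubgroup := by
      rw [← QuotientGroup.eq]
      exact hy
    have hmem : w⁻¹ * y ∈ (U : Set G) := by
      have h' := (inv_mem this : (y⁻¹ * w)⁻¹ ∈ U.toSubgroup)
      simp only [mul_inv_rev, inv_inv] at h'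
      exact h'
    obtain ⟨z, hzW, hz⟩ := hU hmem
    have hyz : y = z := by
      have : w⁻¹ * y = w⁻¹ * z := by rw [← hz]; simp [smul_eq_mul]
      exact mul_left_cancel this
    rwa [hyz]
  exact ⟨y, hyW, hyH⟩

lemma quot_fiber_closed (U : OpenNormalSubgroup G) (x : G ⧸ U.toSubgroup) :
    IsClosed (QuotientGroup.mk ⁻¹' {x} : Set G) := by
  obtain ⟨g0, rfl⟩ := QuotientGroup.mk_surjective x
  have : (QuotientGroup.mk ⁻¹' {(QuotientGroup.mk g0 : G ⧸ U.toSubgroup)} : Set G)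
      = g0 • (U.toSubgroup : Set G) := by
    ext v
    simp only [Set.mem_preimage, Set.mem_singleton_iff]
    rw [Set.mem_smul_set_iff_inv_smul_mem, smul_eq_mul]
    constructor
    · intro hv
      exact QuotientGroup.eq.mp hv.symm
    · intro hv
      exact (QuotientGroup.eq.mpr hv).symm
  rw [this]
  exact U.toOpenSubgroup.isClosed.smul g0

end GaschutzAux

/-- (Gaschütz) Let `G` be a profinite group topologically generated by `d` elements,
`M` a closed normal subgroup, and `g₁, …, g_k` (`k ≥ d`) elements generating `G`
topologically together with `M`. Then the `gᵢ` can be modified within their cosets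
`gᵢM` so as to topologically generate `G`. -/
theorem gaschutz_lifting_generators
    (G : Type*) [Group G] [TopologicalSpace G] [IsTopologicalGroup G]
    [CompactSpace G] [T2Space G] [TotallyDisconnectedSpace G]
    (d : ℕ)
    (hfg : ∃ s : Fin d → G, Dense ((Subgroup.closure (Set.range s) : Subgroup G) : Set G))
    (M : Subgroup G) [M.Normal] (hMclosed : IsClosed (M : Set G))
    (k : ℕ) (hkd : d ≤ k) (g : Fin k → G)
    (hgen : Dense ((Subgroup.closure (Set.range g) ⊔ M : Subgroup G) : Set G)) :
    ∃ g' : Fin k → G, (∀ i, (g i)⁻¹ * g' i ∈ M) ∧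
      Dense ((Subgroup.closure (Set.range g') : Subgroup G) : Set G) := by
  classical
  obtain ⟨s, hs⟩ := hfg
  set C : OpenNormalSubgroup G → Set (Fin k → G) := fun U =>
    {v | (∀ i, (g i)⁻¹ * v i ∈ M) ∧
      Subgroup.closure (Set.range fun i => (QuotientGroup.mk (v i) : G ⧸ U.toSubgroup)) = ⊤}
    with hC
  -- each C U is nonempty, by the finite Gaschütz lemma
  have hCne : ∀ U : OpenNormalSubgroup G, (C U).Nonempty := by
    intro U
    letI : Finite (G ⧸ U.toSubgroup) :=
      Subgroup.quotient_finite_of_isOpen _ U.toOpenSubgroup.isOpen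
    set π := QuotientGroup.mk' U.toSubgroup with hπ
    have hπsurj : Function.Surjective π := QuotientGroup.mk'_surjective _
    haveI hNnormal : (Subgroup.map π M).Normal := Subgroup.Normal.map ‹M.Normal› π hπsurj
    have hsgen : Subgroup.closure (Set.range fun i => π (s i)) = ⊤ := by
      have h1 := GaschutzAux.map_eq_top_of_dense (Subgroup.closure (Set.range s)) hs U
      rw [MonoidHom.map_closure, ← Set.range_comp] at h1
      exact h1
    have htsup : Subgroup.closure (Set.range fun i => π (g i)) ⊔ Subgroup.map π M = ⊤ := by
      have h2 := GaschutzAux.map_eq_top_of_dense _ hgen U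
      rw [Subgroup.map_sup, MonoidHom.map_closure, ← Set.range_comp] at h2
      exact h2
    obtain ⟨u, hu1, hu2⟩ := GaschutzAux.gaschutz_finite (Subgroup.map π M) hkd
      (fun i => π (s i)) hsgen (fun i => π (g i)) htsup
    have hlift : ∀ i, ∃ m : G, m ∈ M ∧ u i = π (g i * m) := by
      intro i
      obtain ⟨m, hm, hm2⟩ := hu1 i
      refine ⟨m, hm, ?_⟩
      rw [map_mul, hm2]
      group
    choose m hm1 hm2 using hlift
    refine ⟨fun i => g i * m i, ⟨fun i => by simpa using hm1 i, ?_⟩⟩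
    have hvu : (fun i => (QuotientGroup.mk (g i * m i) : G ⧸ U.toSubgroup)) = u :=
      funext fun i => (hm2 i).symm
    rw [hvu]
    exact hu2
  -- each C U is closed
  have hCclosed : ∀ U : OpenNormalSubgroup G, IsClosed (C U) := by
    intro U
    letI : Finite (G ⧸ U.toSubgroup) :=
      Subgroup.quotient_finite_of_isOpen _ U.toOpenSubgroup.isOpen
    have h1 : IsClosed {v : Fin k → G | ∀ i, (g i)⁻¹ * v i ∈ M} := by
      have heq : {v : Fin k → G | ∀ i, (g i)⁻¹ * v i ∈ M}
          = ⋂ i, (fun v : Fin k → G => (g i)⁻¹ * v i) ⁻¹' M := by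
        ext v; simp
      rw [heq]
      exact isClosed_iInter fun i =>
        IsClosed.preimage (continuous_const.mul (continuous_apply i)) hMclosed
    have h2 : IsClosed {v : Fin k → G |
        Subgroup.closure (Set.range fun i => (QuotientGroup.mk (v i) : G ⧸ U.toSubgroup)) = ⊤} := by
      have heq : {v : Fin k → G |
          Subgroup.closure (Set.range fun i => (QuotientGroup.mk (v i) : G ⧸ U.toSubgroup)) = ⊤}
          = ⋃ c ∈ {c : Fin k → G ⧸ U.toSubgroup | Subgroup.closure (Set.range c) = ⊤},
              ⋂ i, (fun v : Fin k → G => v i) ⁻¹' (QuotientGroup.mk ⁻¹' {c i}) := by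
        ext v
        simp only [Set.mem_setOf_eq, Set.mem_iUnion, Set.mem_iInter, Set.mem_preimage,
          Set.mem_singleton_iff]
        constructor
        · intro hv
          exact ⟨fun i => QuotientGroup.mk (v i), hv, fun i => rfl⟩
        · rintro ⟨c, hc, hvc⟩
          have : (fun i => (QuotientGroup.mk (v i) : G ⧸ U.toSubgroup)) = c := funext hvc
          rw [this]
          exact hc
      rw [heq]
      refine Set.Finite.isClosed_biUnion (Set.toFinite _) fun c _ => ?_
      exact isClosed_iInter fun i =>
        (GaschutzAux.quot_fiber_closed U (c i)).preimage (continuous_apply i)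
    exact h1.inter h2
  -- monotonicity and directedness
  have hmono : ∀ U V : OpenNormalSubgroup G, V.toSubgroup ≤ U.toSubgroup → C V ⊆ C U := by
    intro U V hle v hv
    refine ⟨hv.1, ?_⟩
    set f : G ⧸ V.toSubgroup →* G ⧸ U.toSubgroup :=
      QuotientGroup.map V.toSubgroup U.toSubgroup (MonoidHom.id G)
        (fun x hx => hle hx) with hf
    have hfsurj : Function.Surjective f := by
      intro x
      obtain ⟨y, rfl⟩ := QuotientGroup.mk_surjective x
      exact ⟨QuotientGroup.mk y, QuotientGroup.map_mk _ _ _ _ _⟩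
    have hmap : Subgroup.map f
        (Subgroup.closure (Set.range fun i => (QuotientGroup.mk (v i) : G ⧸ V.toSubgroup))) = ⊤ := by
      rw [hv.2, ← MonoidHom.range_eq_map, MonoidHom.range_eq_top]
      exact hfsurj
    rw [MonoidHom.map_closure, ← Set.range_comp] at hmap
    have hcomp : (fun i => (QuotientGroup.mk (v i) : G ⧸ U.toSubgroup))
        = ⇑f ∘ fun i => (QuotientGroup.mk (v i) : G ⧸ V.toSubgroup) := by
      funext i
      exact (QuotientGroup.map_mk V.toSubgroup U.toSubgroup (MonoidHom.id G)
        (fun x hx => hle hx) (v i)).symm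
    rw [hcomp]
    exact hmap
  have hdir : Directed (· ⊇ ·) C := by
    intro U V
    exact ⟨U ⊓ V, hmono U (U ⊓ V) inf_le_left, hmono V (U ⊓ V) inf_le_right⟩
  -- compactness
  obtain ⟨v, hv⟩ := IsCompact.nonempty_iInter_of_directed_nonempty_isCompact_isClosed C hdir
    hCne (fun U => (hCclosed U).isCompact) hCclosed
  rw [Set.mem_iInter] at hv
  refine ⟨v, (hv (Classical.arbitrary _)).1, ?_⟩
  apply GaschutzAux.dense_of_forall_map_eq_top
  intro U
  have h2 := (hv U).2
  rw [MonoidHom.map_closure, ← Set.range_comp]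
  exact h2
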